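/- Let k be an even positive integer and Δ ∈ (0, 1/k), and let ν = 2·(k/Δ²)^{1/3} (assumed a positive even integer). For each w ∈ {0,1}^{k/2}, define the block B_w = P′_{w,1} × ⋯ × P′_{w,ν} on [k]^ν by P′_{w,i}(j) = 1/k + (−1)^j · w_{⌈j/2⌉} · Δ·(i−1)/k for i ≤ ν/2 and P′_{w,i}(j) = P′_{w,ν−i+1}(j) for i > ν/2, and let ℬ = {B_w : w ∈ {0,1}^{k/2}}. Then there is an absolute constant c₀ > 0 such that for every m ≥ 1, every ℓ ∈ [m], every choice of blocks B_1,…,B_{ℓ−1} ∈ ℬ with S′ = B_1 × ⋯ × B_{ℓ−1}: the infimum over estimators θ̂_{ν(ℓ−1)+1},…,θ̂_{νℓ} of the maximum over B ∈ ℬ (with S = S′ × B) of E_{X∼S}[(1/ν)·∑_{i=ν(ℓ−1)+1}^{νℓ} TV(θ̂_i(X_1,…,X_i), P_i)] is at least c₀·(kΔ)^{1/3}, where P_i denotes the i-th component of S. -/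

import Mathlib

open Finset

/-- `p` is a probability mass function on `Fin k` (representing `[k] = {1,…,k}`). -/
def IsPMF {k : ℕ} (p : Fin k → ℝ) : Prop :=
  (∀ j, 0 ≤ p j) ∧ ∑ j, p j = 1

/-- Total variation distance between two pmfs on `Fin k`. -/
noncomputable def TV {k : ℕ} (p q : Fin k → ℝ) : ℝ :=
  (1 / 2) * ∑ j, |p j - q j|

/-- Probability of the sample `x` under the product distribution whose `i`-th component
(1-based, `i = 1,…,n`) is `P i`. -/
noncomputable def prodProb {n k : ℕ} (P : ℕ → Fin k → ℝ) (x : Fin n → Fin k) : ℝ :=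
  ∏ i : Fin n, P (i.1 + 1) (x i)

/-- Expectation of `f` over the product distribution `P 1 × ⋯ × P n` on `[k]^n`. -/
noncomputable def Exp {n k : ℕ} (P : ℕ → Fin k → ℝ) (f : (Fin n → Fin k) → ℝ) : ℝ :=
  ∑ x : Fin n → Fin k, prodProb P x * f x

/-- A sequence of online estimators is adapted if the estimate at time `i` depends only on
the first `i` coordinates of the sample. -/
def Adapted (n k : ℕ) (θ : ℕ → (Fin n → Fin k) → Fin k → ℝ) : Prop :=
  ∀ (i : ℕ) (x y : Fin n → Fin k), (∀ j : Fin n, (j : ℕ) + 1 ≤ i → x j = y j) → θ i x = θ i y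

/-- The `i`-th distribution (1-based, `i ∈ [ν]`) of the block `B_w` on `[k]^ν` (`k = 2k'`):
`P′_{w,i}(j) = 1/k + (−1)^j·w_{⌈j/2⌉}·Δ(i−1)/k` for `i ≤ ν/2`, and
`P′_{w,i} = P′_{w,ν−i+1}` for `i > ν/2`. The element `j ∈ [k]` is `j.val + 1`. -/
noncomputable def blockP (k' ν : ℕ) (Δ : ℝ) (w : Fin k' → Bool) (i : ℕ)
    (j : Fin (2 * k')) : ℝ :=
  let i' : ℕ := if i ≤ ν / 2 then i else ν - i + 1
  1 / (2 * (k' : ℝ)) +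
    (if w ⟨j.1 / 2, by omega⟩ then
      (-1 : ℝ) ^ (j.1 + 1) * (Δ * ((i' : ℝ) - 1)) / (2 * (k' : ℝ))
    else 0)

/-- The product distribution obtained by concatenating blocks: block `b` (0-based) has
hypercube index `W b`, and the component at (1-based) time `i` is the
`(i − ⌊(i−1)/ν⌋·ν)`-th component of the block `⌊(i−1)/ν⌋`. -/
noncomputable def concatP (k' ν : ℕ) (Δ : ℝ) (W : ℕ → Fin k' → Bool) (i : ℕ) :
    Fin (2 * k') → ℝ :=
  blockP k' ν Δ (W ((i - 1) / ν)) (i - ((i - 1) / ν) * ν)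


/-- Le Cam two-point bound. -/
lemma lecam {α : Type*} [Fintype α] (p q f g : α → ℝ) (δ : ℝ)
    (hp0 : ∀ x, 0 ≤ p x) (hq0 : ∀ x, 0 ≤ q x)
    (hp1 : ∑ x, p x = 1) (hq1 : ∑ x, q x = 1)
    (hf : ∀ x, 0 ≤ f x) (hg : ∀ x, 0 ≤ g x)
    (hδ0 : 0 ≤ δ) (hδ : ∀ x, δ ≤ f x + g x) :
    δ * (∑ x, Real.sqrt (p x * q x))^2 / 2 ≤ (∑ x, p x * f x) + (∑ x, q x * g x) := by
  set A : ℝ := ∑ x, min (p x) (q x) with hA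
  have hA0 : 0 ≤ A := Finset.sum_nonneg fun x _ => le_min (hp0 x) (hq0 x)
  -- Cauchy–Schwarz: (∑ √(pq))² ≤ A * (∑ max) ≤ 2A
  have hCS : (∑ x, Real.sqrt (p x * q x))^2 ≤ A * ∑ x, max (p x) (q x) := by
    apply Finset.sum_sq_le_sum_mul_sum_of_sq_eq_mul
    · exact fun x _ => le_min (hp0 x) (hq0 x)
    · exact fun x _ => le_max_of_le_left (hp0 x)
    · intro x _
      rw [Real.sq_sqrt (mul_nonneg (hp0 x) (hq0 x))]
      rcases le_total (p x) (q x) with h | h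
      · rw [min_eq_left h, max_eq_right h]
      · rw [min_eq_right h, max_eq_left h]; ring
  have hmaxsum : ∑ x, max (p x) (q x) ≤ 2 := by
    have : ∀ x : α, max (p x) (q x) ≤ p x + q x := fun x =>
      max_le (le_add_of_nonneg_right (hq0 x)) (le_add_of_nonneg_left (hp0 x))
    calc ∑ x, max (p x) (q x) ≤ ∑ x, (p x + q x) := Finset.sum_le_sum fun x _ => this x
      _ = 2 := by rw [Finset.sum_add_distrib, hp1, hq1]; norm_num
  have h1 : (∑ x, Real.sqrt (p x * q x))^2 ≤ 2 * A := by
    calc (∑ x, Real.sqrt (p x * q x))^2 ≤ A * ∑ x, max (p x) (q x) := hCS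
      _ ≤ A * 2 := by apply mul_le_mul_of_nonneg_left hmaxsum hA0
      _ = 2 * A := by ring
  -- lower bound RHS by δ·A
  have h2 : δ * A ≤ (∑ x, p x * f x) + (∑ x, q x * g x) := by
    calc δ * A = ∑ x, δ * min (p x) (q x) := by rw [Finset.mul_sum]
      _ ≤ ∑ x, (min (p x) (q x) * f x + min (p x) (q x) * g x) := by
          apply Finset.sum_le_sum
          intro x _
          have hm0 : 0 ≤ min (p x) (q x) := le_min (hp0 x) (hq0 x)
          have := mul_le_mul_of_nonneg_left (hδ x) hm0
          nlinarith
      _ = (∑ x, min (p x) (q x) * f x) + ∑ x, min (p x) (q x) * g x :=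
          Finset.sum_add_distrib
      _ ≤ (∑ x, p x * f x) + (∑ x, q x * g x) := by
          apply add_le_add
          · exact Finset.sum_le_sum fun x _ =>
              mul_le_mul_of_nonneg_right (min_le_left _ _) (hf x)
          · exact Finset.sum_le_sum fun x _ =>
              mul_le_mul_of_nonneg_right (min_le_right _ _) (hg x)
  calc δ * (∑ x, Real.sqrt (p x * q x))^2 / 2 ≤ δ * (2*A) / 2 := by
        apply div_le_div_of_nonneg_right ?_ ?_
        · exact mul_le_mul_of_nonneg_left h1 hδ0
        · norm_num
    _ = δ * A := by ring
    _ ≤ _ := h2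
lemma sqrt_prod {ι : Type*} (s : Finset ι) (f : ι → ℝ) (h : ∀ i ∈ s, 0 ≤ f i) :
    Real.sqrt (∏ i ∈ s, f i) = ∏ i ∈ s, Real.sqrt (f i) := by
  classical
  induction s using Finset.induction with
  | empty => simp
  | @insert a s' hx ih =>
      rw [Finset.prod_insert hx, Finset.prod_insert hx,
        Real.sqrt_mul (h a (mem_insert_self a s')), ih fun i hi => h i (mem_insert_of_mem hi)]

lemma prodProb_nonneg {n k : ℕ} (P : ℕ → Fin k → ℝ) (hP : ∀ i j, 1 ≤ i → 0 ≤ P i j)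
    (x : Fin n → Fin k) : 0 ≤ prodProb P x :=
  Finset.prod_nonneg fun i _ => hP _ _ (by omega)

lemma prodProb_sum {n k : ℕ} (P : ℕ → Fin k → ℝ) :
    ∑ x : Fin n → Fin k, prodProb P x = ∏ i : Fin n, ∑ j, P (i.1 + 1) j := by
  rw [Finset.prod_univ_sum]
  rw [Fintype.piFinset_univ]
  rfl

lemma hellinger_tensor {n k : ℕ} (P Q : ℕ → Fin k → ℝ)
    (hP : ∀ i j, 1 ≤ i → 0 ≤ P i j) (hQ : ∀ i j, 1 ≤ i → 0 ≤ Q i j) :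
    ∑ x : Fin n → Fin k, Real.sqrt (prodProb P x * prodProb Q x)
      = ∏ i : Fin n, ∑ j, Real.sqrt (P (i.1 + 1) j * Q (i.1 + 1) j) := by
  rw [Finset.prod_univ_sum, Fintype.piFinset_univ]
  apply Finset.sum_congr rfl
  intro x _
  rw [show prodProb P x * prodProb Q x = ∏ i : Fin n, (P (i.1+1) (x i) * Q (i.1+1) (x i)) by
    rw [prodProb, prodProb, ← Finset.prod_mul_distrib]]
  rw [sqrt_prod _ _ fun i _ => mul_nonneg (hP _ _ (by omega)) (hQ _ _ (by omega))]
def pos' (ν i : ℕ) : ℕ := if i ≤ ν / 2 then i else ν - i + 1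

noncomputable def qfun (k' : ℕ) (t : ℝ) (w : Fin k' → Bool) (j : Fin (2 * k')) : ℝ :=
  1 / (2 * (k' : ℝ)) +
    (if w ⟨j.1 / 2, by omega⟩ then (-1 : ℝ) ^ (j.1 + 1) * t / (2 * (k' : ℝ)) else 0)

lemma blockP_eq (k' ν : ℕ) (Δ : ℝ) (w : Fin k' → Bool) (i : ℕ) :
    blockP k' ν Δ w i = qfun k' (Δ * ((pos' ν i : ℝ) - 1)) w := rfl

def coordA (k' : ℕ) (s : Fin k') : Fin (2 * k') := ⟨2 * s.1, by omega⟩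
def coordB (k' : ℕ) (s : Fin k') : Fin (2 * k') := ⟨2 * s.1 + 1, by omega⟩

lemma qfun_A (k' : ℕ) (t : ℝ) (w : Fin k' → Bool) (s : Fin k') :
    qfun k' t w (coordA k' s) = 1 / (2 * (k' : ℝ)) + (if w s then -(t / (2 * (k' : ℝ))) else 0) := by
  unfold qfun coordA
  have h1 : (⟨2 * s.1 / 2, by omega⟩ : Fin k') = s := by
    apply Fin.ext; show 2 * s.1 / 2 = s.1; omega
  rw [h1]
  have h2 : (-1 : ℝ) ^ (2 * s.1 + 1) = -1 := Odd.neg_one_pow ⟨s.1, by ring⟩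
  rw [h2]
  split_ifs <;> ring

lemma qfun_B (k' : ℕ) (t : ℝ) (w : Fin k' → Bool) (s : Fin k') :
    qfun k' t w (coordB k' s) = 1 / (2 * (k' : ℝ)) + (if w s then t / (2 * (k' : ℝ)) else 0) := by
  unfold qfun coordB
  have h1 : (⟨(2 * s.1 + 1) / 2, by omega⟩ : Fin k') = s := by
    apply Fin.ext; show (2 * s.1 + 1) / 2 = s.1; omega
  rw [h1]
  have h2 : (-1 : ℝ) ^ (2 * s.1 + 1 + 1) = 1 := Even.neg_one_pow ⟨s.1 + 1, by ring⟩
  rw [h2]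
  split_ifs <;> ring

lemma sum_ext' {n : ℕ} (p : Fin n → ℝ) :
    ∑ j, p j = ∑ j ∈ range n, (if h : j < n then p ⟨j, h⟩ else 0) := by
  rw [← Fin.sum_univ_eq_sum_range]
  exact Finset.sum_congr rfl fun j _ => by simp

lemma pair_sum' {M : Type*} [AddCommMonoid M] (F : ℕ → M) (n : ℕ) :
    ∑ j ∈ range (2*n), F j = ∑ s ∈ range n, (F (2*s) + F (2*s+1)) := by
  induction n with
  | zero => simp
  | succ n ih =>
      have h2 : 2*(n+1) = (2*n) + 1 + 1 := by ring
      rw [h2, Finset.sum_range_succ, Finset.sum_range_succ, ih, Finset.sum_range_succ, add_assoc]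

lemma fin_pair_sum {k' : ℕ} (F : Fin (2 * k') → ℝ) :
    ∑ j, F j = ∑ s : Fin k', (F (coordA k' s) + F (coordB k' s)) := by
  rw [sum_ext' F, pair_sum', ← Fin.sum_univ_eq_sum_range
    (fun s => (if h : 2*s < 2*k' then F ⟨2*s, h⟩ else 0) +
      (if h : 2*s+1 < 2*k' then F ⟨2*s+1, h⟩ else 0)) k']
  apply Finset.sum_congr rfl
  intro s _
  have hA : 2 * s.1 < 2 * k' := by omega
  have hB : 2 * s.1 + 1 < 2 * k' := by omega
  rw [dif_pos hA, dif_pos hB]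
  rfl

lemma qfun_sum (k' : ℕ) (hk' : 0 < k') (t : ℝ) (w : Fin k' → Bool) :
    ∑ j, qfun k' t w j = 1 := by
  rw [fin_pair_sum]
  have : ∀ s : Fin k', qfun k' t w (coordA k' s) + qfun k' t w (coordB k' s)
      = 1 / (k' : ℝ) := by
    intro s
    rw [qfun_A, qfun_B]
    split_ifs <;> ring
  rw [Finset.sum_congr rfl fun s _ => this s, Finset.sum_const, card_univ, Fintype.card_fin,
    nsmul_eq_mul]
  field_simp

lemma qfun_nonneg (k' : ℕ) (hk' : 0 < k') (t : ℝ) (ht0 : 0 ≤ t) (ht1 : t ≤ 1)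
    (w : Fin k' → Bool) (j : Fin (2 * k')) : 0 ≤ qfun k' t w j := by
  have hK : (0:ℝ) < 2 * k' := by positivity
  unfold qfun
  split_ifs with h
  · rcases Nat.even_or_odd (j.1 + 1) with he | ho
    · rw [he.neg_one_pow, one_mul]
      positivity
    · rw [ho.neg_one_pow, neg_one_mul, neg_div]
      have h2 : t / (2 * (k':ℝ)) ≤ 1 / (2 * (k':ℝ)) := by gcongr
      linarith
  · positivity

lemma sqrt_pair_ineq (t : ℝ) (ht0 : 0 ≤ t) (ht1 : t ≤ 1) :
    2 - t^2 ≤ Real.sqrt (1-t) + Real.sqrt (1+t) := by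
  set s1 := Real.sqrt (1-t) with hs1
  set s2 := Real.sqrt (1+t) with hs2
  have h1 : s1^2 = 1 - t := Real.sq_sqrt (by linarith)
  have h2 : s2^2 = 1 + t := Real.sq_sqrt (by linarith)
  have h10 : 0 ≤ s1 := Real.sqrt_nonneg _
  have h20 : 0 ≤ s2 := Real.sqrt_nonneg _
  have hB : (s1*s2)^2 = 1 - t^2 := by rw [mul_pow, h1, h2]; ring
  have hBle1 : s1*s2 ≤ 1 := by nlinarith [mul_nonneg h10 h20]
  have hBge : 1 - t^2 ≤ s1*s2 := by nlinarith [mul_nonneg h10 h20]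
  nlinarith [sq_nonneg (s1 + s2 - (2 - t^2)), sq_nonneg (s1+s2)]

lemma qfun_sep (k' : ℕ) (hk' : 0 < k') (t : ℝ) (ht0 : 0 ≤ t) (w : Fin k' → Bool) (s : Fin k') :
    |qfun k' t w (coordA k' s) - qfun k' t (Function.update w s (!(w s))) (coordA k' s)|
      + |qfun k' t w (coordB k' s) - qfun k' t (Function.update w s (!(w s))) (coordB k' s)|
      = 2 * (t / (2 * (k' : ℝ))) := by
  have hK : (0:ℝ) < 2 * k' := by positivity
  have habs : |t / (2 * (k':ℝ))| = t / (2 * (k':ℝ)) := abs_of_nonneg (by positivity)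
  rw [qfun_A, qfun_A, qfun_B, qfun_B, Function.update_self]
  cases h : w s
  · simp only [h, Bool.not_false, if_true, if_false, Bool.false_eq_true, Bool.true_eq_false]
    rw [show (1:ℝ)/(2*k') + 0 - ((1:ℝ)/(2*k') + -(t/(2*k'))) = t/(2*k') by ring,
        show (1:ℝ)/(2*k') + 0 - ((1:ℝ)/(2*k') + t/(2*k')) = -(t/(2*k')) by ring,
        abs_neg, habs]
    ring
  · simp only [h, Bool.not_true, if_true, if_false, Bool.false_eq_true, Bool.true_eq_false]
    rw [show (1:ℝ)/(2*k') + -(t/(2*k')) - ((1:ℝ)/(2*k') + 0) = -(t/(2*k')) by ring,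
        show (1:ℝ)/(2*k') + t/(2*k') - ((1:ℝ)/(2*k') + 0) = t/(2*k') by ring,
        abs_neg, habs]
    ring

lemma sqrt_pair_half (K t : ℝ) (hK : 0 < K) (ht0 : 0 ≤ t) (ht1 : t ≤ 1) :
    (2 - t^2)/K ≤ Real.sqrt ((1/K + -(t/K)) * (1/K + 0))
      + Real.sqrt ((1/K + t/K) * (1/K + 0)) := by
  have e1 : (1/K + -(t/K)) * (1/K + 0) = (1-t) * (1/K)^2 := by ring
  have e2 : (1/K + t/K) * (1/K + 0) = (1+t) * (1/K)^2 := by ring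
  have hKinv : (0:ℝ) ≤ 1/K := by positivity
  rw [e1, e2, Real.sqrt_mul (by linarith) _, Real.sqrt_mul (by linarith) _,
    Real.sqrt_sq hKinv]
  have := sqrt_pair_ineq t ht0 ht1
  rw [div_eq_mul_one_div]
  nlinarith [Real.sqrt_nonneg (1-t), Real.sqrt_nonneg (1+t)]

lemma qfun_affinity (k' : ℕ) (hk' : 0 < k') (t : ℝ) (ht0 : 0 ≤ t) (ht1 : t ≤ 1)
    (w : Fin k' → Bool) (s : Fin k') :
    1 - t^2 / (2 * (k' : ℝ)) ≤
      ∑ j, Real.sqrt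
        (qfun k' t w j * qfun k' t (Function.update w s (!(w s))) j) := by
  classical
  have hK : (0:ℝ) < 2 * k' := by positivity
  rw [fin_pair_sum]
  have hbound : ∀ s' : Fin k',
      (if s' = s then (2 - t^2) / (2*(k':ℝ)) else 2 / (2*(k':ℝ)))
      ≤ Real.sqrt (qfun k' t w (coordA k' s')
            * qfun k' t (Function.update w s (!(w s))) (coordA k' s'))
        + Real.sqrt (qfun k' t w (coordB k' s')
            * qfun k' t (Function.update w s (!(w s))) (coordB k' s')) := by
    intro s'
    by_cases hss : s' = s
    · subst hss
      rw [if_pos rfl, qfun_A, qfun_A, qfun_B, qfun_B, Function.update_self]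
      cases h : w s'
      · simp only [h, Bool.not_false, if_true, if_false, Bool.false_eq_true, Bool.true_eq_false]
        have := sqrt_pair_half (2*(k':ℝ)) t hK ht0 ht1
        rw [show ((1:ℝ)/(2*k') + 0) * ((1:ℝ)/(2*k') + -(t/(2*k')))
              = ((1:ℝ)/(2*k') + -(t/(2*k'))) * ((1:ℝ)/(2*k') + 0) by ring,
            show ((1:ℝ)/(2*k') + 0) * ((1:ℝ)/(2*k') + t/(2*k'))
              = ((1:ℝ)/(2*k') + t/(2*k')) * ((1:ℝ)/(2*k') + 0) by ring]
        linarith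
      · simp only [h, Bool.not_true, if_true, if_false, Bool.false_eq_true, Bool.true_eq_false]
        have := sqrt_pair_half (2*(k':ℝ)) t hK ht0 ht1
        linarith
    · rw [if_neg hss, qfun_A, qfun_A, qfun_B, qfun_B, Function.update_of_ne hss]
      have hA0 : 0 ≤ 1 / (2*(k':ℝ)) + (if w s' then -(t / (2*(k':ℝ))) else 0) := by
        split_ifs
        · have h2 : t / (2 * (k':ℝ)) ≤ 1 / (2 * (k':ℝ)) := by gcongr
          linarith
        · positivity
      have hB0 : 0 ≤ 1 / (2*(k':ℝ)) + (if w s' then (t / (2*(k':ℝ))) else 0) := by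
        split_ifs
        · positivity
        · positivity
      rw [Real.sqrt_mul_self hA0, Real.sqrt_mul_self hB0]
      split_ifs <;> ring_nf <;> norm_num
  calc 1 - t^2 / (2*(k':ℝ))
      = ∑ s' : Fin k', (if s' = s then (2 - t^2) / (2*(k':ℝ)) else 2 / (2*(k':ℝ))) := by
        have : ∀ s' : Fin k', (if s' = s then (2 - t^2) / (2*(k':ℝ)) else 2 / (2*(k':ℝ)))
            = 2 / (2*(k':ℝ)) + (if s' = s then (2 - t^2) / (2*(k':ℝ)) - 2 / (2*(k':ℝ)) else 0) := by
          intro s'; split_ifs <;> ring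
        rw [Finset.sum_congr rfl fun s' _ => this s', Finset.sum_add_distrib,
          Finset.sum_const, Finset.sum_ite_eq' univ s, if_pos (mem_univ s),
          card_univ, Fintype.card_fin, nsmul_eq_mul]
        have hk0 : (k':ℝ) ≠ 0 := by positivity
        field_simp
        ring
    _ ≤ _ := Finset.sum_le_sum fun s' _ => hbound s'

lemma sum_sq_bound : ∀ h : ℕ, ∑ m ∈ range h, (m:ℝ)^2 ≤ (h:ℝ)^3/3 := by
  intro h; induction h with
  | zero => simp
  | succ n ih =>
      rw [Finset.sum_range_succ]
      push_cast
      nlinarith [Nat.cast_nonneg (α := ℝ) n]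

lemma sum_id_eq (h : ℕ) : ∑ m ∈ range h, (m:ℝ) = (h:ℝ)*((h:ℝ)-1)/2 := by
  induction h with
  | zero => simp
  | succ n ih => rw [Finset.sum_range_succ, ih]; push_cast; ring

lemma ppos_bounds (ν τ : ℕ) (hν : 0 < ν) (hτ : 1 ≤ τ) :
    1 ≤ τ - ((τ-1)/ν)*ν ∧ τ - ((τ-1)/ν)*ν ≤ ν := by
  have h1 := Nat.div_add_mod (τ-1) ν
  have h2 := Nat.mod_lt (τ-1) hν
  have h3 := Nat.mul_comm ((τ-1)/ν) ν
  omega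

lemma pos'_bounds (ν p : ℕ) (hE : ν % 2 = 0) (hp1 : 1 ≤ p) (hp2 : p ≤ ν) :
    1 ≤ pos' ν p ∧ pos' ν p ≤ ν/2 := by
  unfold pos'; split_ifs <;> omega

lemma bidx_window (ν a τ ℓ : ℕ) (hν : 0 < ν) (ha : a = ν*(ℓ-1)) (hℓ : 1 ≤ ℓ)
    (h1 : a + 1 ≤ τ) (h2 : τ ≤ a + ν) :
    (τ-1)/ν = ℓ-1 ∧ τ - ((τ-1)/ν)*ν = τ - a := by
  have hc := Nat.mul_comm ν (ℓ-1)
  have hd : (τ-1)/ν = ℓ-1 := by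
    apply Nat.div_eq_of_lt_le
    · omega
    · have h4 : (ℓ-1+1)*ν = (ℓ-1)*ν + ν := by ring
      omega
  exact ⟨hd, by rw [hd]; omega⟩

lemma bidx_prefix (ν a τ ℓ : ℕ) (hν : 0 < ν) (ha : a = ν*(ℓ-1)) (hℓ : 1 ≤ ℓ)
    (h1 : 1 ≤ τ) (h2 : τ ≤ a) : (τ-1)/ν ≠ ℓ-1 := by
  have hc := Nat.mul_comm ν (ℓ-1)
  have : (τ-1)/ν < ℓ-1 := by
    rw [Nat.div_lt_iff_lt_mul hν]; omega
  omega

lemma window_sum_lower (ν h : ℕ) (hh : ν = 2*h) :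
    (h:ℝ)*((h:ℝ)-1)/2 ≤ ∑ r ∈ range ν, ((pos' ν (r+1) : ℝ) - 1) := by
  have hsub : range h ⊆ range ν := by
    apply Finset.range_subset_range.mpr; omega
  have hnn : ∀ r ∈ range ν, (0:ℝ) ≤ (pos' ν (r+1) : ℝ) - 1 := by
    intro r hr
    have := pos'_bounds ν (r+1) (by omega) (by omega) (by simp at hr; omega)
    have h1 : (1:ℝ) ≤ (pos' ν (r+1) : ℝ) := by exact_mod_cast this.1
    linarith
  calc (h:ℝ)*((h:ℝ)-1)/2 = ∑ r ∈ range h, (r:ℝ) := (sum_id_eq h).symm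
    _ = ∑ r ∈ range h, ((pos' ν (r+1) : ℝ) - 1) := by
        apply Finset.sum_congr rfl
        intro r hr
        simp only [Finset.mem_range] at hr
        have hp : pos' ν (r+1) = r+1 := by unfold pos'; rw [if_pos (by omega)]
        rw [hp]; push_cast; ring
    _ ≤ ∑ r ∈ range ν, ((pos' ν (r+1) : ℝ) - 1) :=
        Finset.sum_le_sum_of_subset_of_nonneg hsub fun r hr _ => hnn r hr

lemma window_sum_sq_upper (ν h : ℕ) (hh : ν = 2*h) :
    ∑ r ∈ range ν, ((pos' ν (r+1) : ℝ) - 1)^2 ≤ 2*(h:ℝ)^3/3 := by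
  have hsplit : range ν = Ico 0 ν := by rw [Finset.range_eq_Ico]
  rw [hsplit, ← Finset.sum_Ico_consecutive _ (Nat.zero_le h) (by omega : h ≤ ν)]
  have e1 : ∑ r ∈ Ico 0 h, ((pos' ν (r+1) : ℝ) - 1)^2 = ∑ r ∈ range h, (r:ℝ)^2 := by
    rw [← Finset.range_eq_Ico]
    apply Finset.sum_congr rfl
    intro r hr
    simp only [Finset.mem_range] at hr
    have hp : pos' ν (r+1) = r+1 := by unfold pos'; rw [if_pos (by omega)]
    rw [hp]; push_cast; ring
  have e2 : ∑ r ∈ Ico h ν, ((pos' ν (r+1) : ℝ) - 1)^2 = ∑ r ∈ range h, (r:ℝ)^2 := by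
    rw [Finset.sum_Ico_eq_sum_range]
    have hν : ν - h = h := by omega
    rw [hν]
    rw [← Finset.sum_range_reflect (fun m => (m:ℝ)^2) h]
    apply Finset.sum_congr rfl
    intro m hm
    simp only [Finset.mem_range] at hm
    have hp : pos' ν (h + m + 1) = h - m := by
      unfold pos'; rw [if_neg (by omega)]; omega
    rw [hp]
    have : h - 1 - m + 1 = h - m := by omega
    rw [← this]
    push_cast [Nat.cast_sub (by omega : 1 + m ≤ h), Nat.cast_sub (by omega : m ≤ h - 1)]
    ring_nf
  rw [e1, e2]
  have := sum_sq_bound h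
  linarith


lemma numerics (k' ν : ℕ) (Δ : ℝ) (hk' : 0 < k') (hΔ : 0 < Δ)
    (hΔk : Δ < 1/(2*(k':ℝ))) (hν : 0 < ν) (hνe : ν % 2 = 0)
    (hνeq : (ν:ℝ) = 2*((2*(k':ℝ))/Δ^2)^((1:ℝ)/3)) :
    Δ * ((ν/2 : ℕ):ℝ) ≤ 1 ∧ Δ^2 * ((ν/2 : ℕ):ℝ)^3 = 2*(k':ℝ) ∧ 3 ≤ ν/2 ∧
      (Δ*(ν:ℝ)/2)^(3:ℕ) = (2*(k':ℝ))*Δ := by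
  have hK0 : (0:ℝ) < 2*(k':ℝ) := by positivity
  have hK1 : (2:ℝ) ≤ 2*(k':ℝ) := by
    have : (1:ℝ) ≤ (k':ℝ) := by exact_mod_cast hk'
    nlinarith
  set h : ℕ := ν/2 with hdef
  have hν2h : ν = 2*h := by omega
  have hhR : (ν:ℝ) = 2*(h:ℝ) := by rw [hν2h]; push_cast; ring
  -- cube identity
  have hcube0 : ((ν:ℝ)/2)^(3:ℕ) = (2*(k':ℝ))/Δ^2 := by
    rw [hνeq]
    rw [show (2*((2*(k':ℝ))/Δ^2)^((1:ℝ)/3))/2 = ((2*(k':ℝ))/Δ^2)^((1:ℝ)/3) by ring]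
    rw [← Real.rpow_natCast (((2*(k':ℝ))/Δ^2)^((1:ℝ)/3)) 3, ← Real.rpow_mul (by positivity)]
    norm_num
  have hhcube : (h:ℝ)^3 = (2*(k':ℝ))/Δ^2 := by
    rw [← hcube0, hhR]; ring
  have hΔ2 : Δ^2 * (h:ℝ)^3 = 2*(k':ℝ) := by
    rw [hhcube]; field_simp
  -- h > 2k'
  have hKh : (2*(k':ℝ)) < (h:ℝ) := by
    have hΔsq : Δ^2 < (1/(2*(k':ℝ)))^2 := by nlinarith
    have h1 : (2*(k':ℝ))^3 < (h:ℝ)^3 := by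
      rw [hhcube]
      rw [lt_div_iff₀ (by positivity)]
      have e : (2*(k':ℝ))^3 * (1/(2*(k':ℝ)))^2 = 2*(k':ℝ) := by
        field_simp
      nlinarith [mul_lt_mul_of_pos_left hΔsq (pow_pos hK0 3)]
    have hh0 : (0:ℝ) ≤ (h:ℝ) := Nat.cast_nonneg _
    nlinarith [sq_nonneg ((h:ℝ) - 2*(k':ℝ)), sq_nonneg ((h:ℝ) + 2*(k':ℝ))]
  have hh0 : (0:ℝ) < (h:ℝ) := lt_trans hK0 hKh
  -- Δ h ≤ 1
  have hΔh : Δ * (h:ℝ) ≤ 1 := by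
    have h2 : (Δ*(h:ℝ))^2 = (2*(k':ℝ))/(h:ℝ) := by
      field_simp
      nlinarith [hΔ2]
    have h3 : (Δ*(h:ℝ))^2 < 1 := by
      rw [h2, div_lt_one hh0]; exact hKh
    nlinarith [mul_pos hΔ hh0]
  -- 3 ≤ h
  have hh3 : 3 ≤ h := by
    have : (2:ℝ) < (h:ℝ) := lt_of_le_of_lt hK1 hKh
    have : 2 < h := by exact_mod_cast this
    omega
  -- final rpow identity base
  have hfin : (Δ*(ν:ℝ)/2)^(3:ℕ) = (2*(k':ℝ))*Δ := by
    have : (Δ*(ν:ℝ)/2) = Δ*(h:ℝ) := by rw [hhR]; ring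
    rw [this]
    have : (Δ*(h:ℝ))^(3:ℕ) = Δ * (Δ^2*(h:ℝ)^3) := by ring
    rw [this, hΔ2]; ring
  exact ⟨hΔh, hΔ2, hh3, hfin⟩

noncomputable def Tval (ν : ℕ) (Δ : ℝ) (τ : ℕ) : ℝ :=
  Δ * ((pos' ν (τ - ((τ-1)/ν)*ν) : ℝ) - 1)

lemma concat_eq (k' ν : ℕ) (Δ : ℝ) (V : ℕ → Fin k' → Bool) (τ : ℕ) :
    concatP k' ν Δ V τ = qfun k' (Tval ν Δ τ) (V ((τ-1)/ν)) := rfl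

lemma TV_decomp {k' : ℕ} (p q : Fin (2*k') → ℝ) :
    TV p q = ∑ s : Fin k',
      (1/2) * (|p (coordA k' s) - q (coordA k' s)| + |p (coordB k' s) - q (coordB k' s)|) := by
  unfold TV
  rw [fin_pair_sum (fun j => |p j - q j|), Finset.mul_sum]

lemma prod_one_sub_ge {ι : Type*} (s : Finset ι) (a : ι → ℝ) (h0 : ∀ i ∈ s, 0 ≤ a i)
    (h1 : ∀ i ∈ s, a i ≤ 1) : 1 - ∑ i ∈ s, a i ≤ ∏ i ∈ s, (1 - a i) := by
  classical
  induction s using Finset.induction with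
  | empty => simp
  | @insert c s' hx ih =>
      rw [Finset.prod_insert hx, Finset.sum_insert hx]
      have hc0 := h0 c (mem_insert_self c s')
      have hc1 := h1 c (mem_insert_self c s')
      have ihs := ih (fun i hi => h0 i (mem_insert_of_mem hi)) (fun i hi => h1 i (mem_insert_of_mem hi))
      have hsum : (0:ℝ) ≤ ∑ i ∈ s', a i := Finset.sum_nonneg fun i hi => h0 i (mem_insert_of_mem hi)
      nlinarith

lemma Tval_bounds (ν : ℕ) (Δ : ℝ) (hν : 0 < ν) (hνe : ν % 2 = 0) (hΔ : 0 < Δ)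
    (hΔh : Δ * ((ν/2 : ℕ):ℝ) ≤ 1) (τ : ℕ) (hτ : 1 ≤ τ) :
    0 ≤ Tval ν Δ τ ∧ Tval ν Δ τ ≤ 1 := by
  obtain ⟨h1, h2⟩ := ppos_bounds ν τ hν hτ
  obtain ⟨h3, h4⟩ := pos'_bounds ν _ hνe h1 h2
  have h3R : (1:ℝ) ≤ (pos' ν (τ - ((τ-1)/ν)*ν) : ℝ) := by exact_mod_cast h3
  have h4R : ((pos' ν (τ - ((τ-1)/ν)*ν) : ℝ)) ≤ ((ν/2:ℕ):ℝ) := by exact_mod_cast h4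
  unfold Tval
  constructor
  · nlinarith
  · nlinarith

lemma concat_nonneg (k' ν : ℕ) (Δ : ℝ) (hk' : 0 < k') (hν : 0 < ν) (hνe : ν % 2 = 0)
    (hΔ : 0 < Δ) (hΔh : Δ * ((ν/2 : ℕ):ℝ) ≤ 1) (V : ℕ → Fin k' → Bool) (τ : ℕ)
    (hτ : 1 ≤ τ) (j : Fin (2*k')) : 0 ≤ concatP k' ν Δ V τ j := by
  rw [concat_eq]
  obtain ⟨hb0, hb1⟩ := Tval_bounds ν Δ hν hνe hΔ hΔh τ hτ
  exact qfun_nonneg k' hk' _ hb0 hb1 _ _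

lemma concat_sum (k' ν : ℕ) (Δ : ℝ) (hk' : 0 < k') (V : ℕ → Fin k' → Bool) (τ : ℕ) :
    ∑ j, concatP k' ν Δ V τ j = 1 := by
  rw [concat_eq]; exact qfun_sum k' hk' _ _

lemma Tval_window (ν ℓ a τ : ℕ) (Δ : ℝ) (hν : 0 < ν) (hℓ : 1 ≤ ℓ) (ha : a = ν*(ℓ-1))
    (h1 : a+1 ≤ τ) (h2 : τ ≤ a+ν) :
    Tval ν Δ τ = Δ * ((pos' ν (τ - a) : ℝ) - 1) ∧ (τ-1)/ν = ℓ-1 := by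
  obtain ⟨hd, hp⟩ := bidx_window ν a τ ℓ hν ha hℓ h1 h2
  exact ⟨by unfold Tval; rw [hp], hd⟩

lemma affinity_bound (k' ν ℓ : ℕ) (Δ : ℝ) (hk' : 0 < k') (hΔ : 0 < Δ) (hν : 0 < ν)
    (hνe : ν % 2 = 0) (hℓ : 1 ≤ ℓ)
    (hΔh : Δ * ((ν/2 : ℕ):ℝ) ≤ 1) (hΔ2 : Δ^2 * ((ν/2:ℕ):ℝ)^3 = 2*(k':ℝ))
    (V V' : ℕ → Fin k' → Bool) (hVV : ∀ b, b ≠ ℓ-1 → V b = V' b)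
    (s : Fin k') (hsV : V' (ℓ-1) = Function.update (V (ℓ-1)) s (!(V (ℓ-1) s))) :
    (1:ℝ)/3 ≤ ∑ x : Fin (ν*ℓ) → Fin (2*k'),
      Real.sqrt (prodProb (concatP k' ν Δ V) x * prodProb (concatP k' ν Δ V') x) := by
  have hK0 : (0:ℝ) < 2*(k':ℝ) := by positivity
  set a := ν*(ℓ-1) with ha
  have hna : ν*ℓ = a + ν := by
    have h1 : ℓ-1+1 = ℓ := by omega
    calc ν*ℓ = ν*(ℓ-1+1) := by rw [h1]
      _ = a + ν := by rw [ha]; ring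
  rw [hellinger_tensor _ _
    (fun i j hi => concat_nonneg k' ν Δ hk' hν hνe hΔ hΔh V i hi j)
    (fun i j hi => concat_nonneg k' ν Δ hk' hν hνe hΔ hΔh V' i hi j)]
  set AN : ℕ → ℝ := fun m =>
    if a + 1 ≤ m+1 then (Tval ν Δ (m+1))^2/(2*(k':ℝ)) else 0 with hAN
  have hAbd : ∀ m : ℕ, 0 ≤ AN m ∧ AN m ≤ 1/2 := by
    intro m
    rw [hAN]
    dsimp only
    split_ifs with hc
    · obtain ⟨hb0, hb1⟩ := Tval_bounds ν Δ hν hνe hΔ hΔh (m+1) (by omega)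
      constructor
      · positivity
      · have hk1 : (1:ℝ) ≤ (k':ℝ) := by exact_mod_cast hk'
        rw [div_le_iff₀ hK0]
        nlinarith
    · norm_num
  have hcomp : ∀ i : Fin (ν*ℓ), 1 - AN i.1 ≤
      ∑ j, Real.sqrt (concatP k' ν Δ V (i.1+1) j * concatP k' ν Δ V' (i.1+1) j) := by
    intro i
    have hile : i.1 + 1 ≤ a + ν := by have := i.2; omega
    by_cases hc : a + 1 ≤ i.1 + 1
    · obtain ⟨hTw, hd⟩ := Tval_window ν ℓ a (i.1+1) Δ hν hℓ ha hc hile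
      rw [concat_eq, concat_eq, hd, hsV]
      obtain ⟨hb0, hb1⟩ := Tval_bounds ν Δ hν hνe hΔ hΔh (i.1+1) (by omega)
      have := qfun_affinity k' hk' (Tval ν Δ (i.1+1)) hb0 hb1 (V (ℓ-1)) s
      rw [hAN]
      dsimp only
      rw [if_pos hc]
      exact this
    · have hb : (i.1+1-1)/ν ≠ ℓ-1 :=
        bidx_prefix ν a (i.1+1) ℓ hν ha hℓ (by omega) (by omega)
      rw [concat_eq, concat_eq, ← hVV _ hb]
      rw [hAN]
      dsimp only
      rw [if_neg hc]
      obtain ⟨hb0, hb1⟩ := Tval_bounds ν Δ hν hνe hΔ hΔh (i.1+1) (by omega)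
      have heq : ∀ j, Real.sqrt (qfun k' (Tval ν Δ (i.1+1)) (V ((i.1+1-1)/ν)) j *
          qfun k' (Tval ν Δ (i.1+1)) (V ((i.1+1-1)/ν)) j)
          = qfun k' (Tval ν Δ (i.1+1)) (V ((i.1+1-1)/ν)) j := fun j =>
        Real.sqrt_mul_self (qfun_nonneg k' hk' _ hb0 hb1 _ j)
      rw [Finset.sum_congr rfl fun j _ => heq j, qfun_sum k' hk']
      norm_num
  have hAsum : ∑ i : Fin (ν*ℓ), AN i.1 ≤ 2/3 := by
    rw [Fin.sum_univ_eq_sum_range AN (ν*ℓ), hna, Finset.range_eq_Ico,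
      ← Finset.sum_Ico_consecutive _ (Nat.zero_le a) (by omega : a ≤ a + ν)]
    have hz : ∑ m ∈ Finset.Ico 0 a, AN m = 0 := by
      apply Finset.sum_eq_zero
      intro m hm
      simp only [Finset.mem_Ico] at hm
      rw [hAN]; dsimp only; rw [if_neg (by omega)]
    rw [hz, zero_add, Finset.sum_Ico_eq_sum_range]
    have hcnt : a + ν - a = ν := by omega
    rw [hcnt]
    set h := ν/2 with hhd
    have hν2h : ν = 2*h := by omega
    have hterm : ∀ r ∈ Finset.range ν, AN (a + r)
        = (Δ * ((pos' ν (r+1) : ℝ) - 1))^2/(2*(k':ℝ)) := by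
      intro r hr
      simp only [Finset.mem_range] at hr
      obtain ⟨hTw, _⟩ := Tval_window ν ℓ a (a+r+1) Δ hν hℓ ha (by omega) (by omega)
      rw [hAN]; dsimp only
      rw [if_pos (by omega)]
      rw [show a + r + 1 - a = r + 1 by omega] at hTw
      rw [hTw]
    rw [Finset.sum_congr rfl hterm]
    have hsq := window_sum_sq_upper ν h hν2h
    have hpull : ∑ r ∈ Finset.range ν, (Δ * ((pos' ν (r+1) : ℝ) - 1))^2/(2*(k':ℝ))
        = Δ^2/(2*(k':ℝ)) * ∑ r ∈ Finset.range ν, ((pos' ν (r+1) : ℝ) - 1)^2 := by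
      rw [Finset.mul_sum]
      apply Finset.sum_congr rfl
      intro r _
      ring
    rw [hpull]
    have hnn : (0:ℝ) ≤ Δ^2/(2*(k':ℝ)) := by positivity
    calc Δ^2/(2*(k':ℝ)) * ∑ r ∈ Finset.range ν, ((pos' ν (r+1) : ℝ) - 1)^2
        ≤ Δ^2/(2*(k':ℝ)) * (2*(h:ℝ)^3/3) := mul_le_mul_of_nonneg_left hsq hnn
      _ = 2/3 * (Δ^2 * (h:ℝ)^3) / (2*(k':ℝ)) := by ring
      _ = 2/3 := by
        rw [hΔ2]
        field_simp
  calc (1:ℝ)/3 ≤ 1 - ∑ i : Fin (ν*ℓ), AN i.1 := by linarith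
    _ ≤ ∏ i : Fin (ν*ℓ), (1 - AN i.1) :=
        prod_one_sub_ge _ _ (fun i _ => (hAbd i.1).1) (fun i _ => by linarith [(hAbd i.1).2])
    _ ≤ ∏ i : Fin (ν*ℓ), ∑ j, Real.sqrt
          (concatP k' ν Δ V (i.1+1) j * concatP k' ν Δ V' (i.1+1) j) := by
        apply Finset.prod_le_prod
        · intro i _; linarith [(hAbd i.1).2]
        · intro i _; exact hcomp i

noncomputable def part {k' : ℕ} (p q : Fin (2*k') → ℝ) (s : Fin k') : ℝ :=
  (1/2) * (|p (coordA k' s) - q (coordA k' s)| + |p (coordB k' s) - q (coordB k' s)|)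

lemma TV_decomp' {k' : ℕ} (p q : Fin (2*k') → ℝ) :
    TV p q = ∑ s : Fin k', part p q s := by
  unfold TV part
  rw [fin_pair_sum (fun j => |p j - q j|), Finset.mul_sum]

lemma part_nonneg {k' : ℕ} (p q : Fin (2*k') → ℝ) (s : Fin k') : 0 ≤ part p q s := by
  unfold part; positivity

set_option maxHeartbeats 1000000 in
lemma pair_bound (k' ν ℓ : ℕ) (Δ : ℝ) (hk' : 0 < k') (hΔ : 0 < Δ) (hν : 0 < ν)
    (hνe : ν % 2 = 0) (hℓ : 1 ≤ ℓ)
    (hΔh : Δ * ((ν/2 : ℕ):ℝ) ≤ 1) (hΔ2 : Δ^2 * ((ν/2:ℕ):ℝ)^3 = 2*(k':ℝ))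
    (W : ℕ → Fin k' → Bool)
    (θ : ℕ → (Fin (ν*ℓ) → Fin (2*k')) → Fin (2*k') → ℝ)
    (τ : ℕ) (hτ1 : ν*(ℓ-1)+1 ≤ τ) (hτ2 : τ ≤ ν*ℓ) (s : Fin k') :
    (2:ℝ)^k' * (Tval ν Δ τ / (2*(k':ℝ)) / 36) ≤
      ∑ w : Fin k' → Bool,
        ∑ x : Fin (ν*ℓ) → Fin (2*k'),
          prodProb (concatP k' ν Δ (fun b => if b = ℓ-1 then w else W b)) x
            * part (θ τ x) (concatP k' ν Δ (fun b => if b = ℓ-1 then w else W b) τ) s := by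
  classical
  have hK0 : (0:ℝ) < 2*(k':ℝ) := by positivity
  have hna : ν*ℓ = ν*(ℓ-1) + ν := by
    have h1 : ℓ-1+1 = ℓ := by omega
    calc ν*ℓ = ν*(ℓ-1+1) := by rw [h1]
      _ = ν*(ℓ-1) + ν := by ring
  have hτν : 1 ≤ τ := by omega
  obtain ⟨hT0, hT1⟩ := Tval_bounds ν Δ hν hνe hΔ hΔh τ hτν
  have hδ0 : 0 ≤ Tval ν Δ τ / (2*(k':ℝ)) := by positivity
  -- the τ-th component is the qfun of the last block
  have hcc : ∀ w' : Fin k' → Bool,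
      concatP k' ν Δ (fun b => if b = ℓ-1 then w' else W b) τ = qfun k' (Tval ν Δ τ) w' := by
    intro w'
    obtain ⟨_, hd⟩ := Tval_window ν ℓ (ν*(ℓ-1)) τ Δ hν hℓ rfl hτ1 (by omega)
    rw [concat_eq, hd, if_pos rfl]
  set σf : (Fin k' → Bool) → (Fin k' → Bool) := fun w => Function.update w s (!(w s)) with hσ
  have hinv : Function.Involutive σf := by
    intro w; funext y
    rcases eq_or_ne y s with hy | hy
    · subst hy; simp [hσ, Function.update_self]
    · simp [hσ, Function.update_of_ne hy]
  set F : (Fin k' → Bool) → ℝ := fun w =>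
    ∑ x : Fin (ν*ℓ) → Fin (2*k'),
      prodProb (concatP k' ν Δ (fun b => if b = ℓ-1 then w else W b)) x
        * part (θ τ x) (concatP k' ν Δ (fun b => if b = ℓ-1 then w else W b) τ) s with hF
  have hper : ∀ w : Fin k' → Bool, Tval ν Δ τ / (2*(k':ℝ)) / 18 ≤ F w + F (σf w) := by
    intro w
    have hF1 : F w = ∑ x : Fin (ν*ℓ) → Fin (2*k'),
        prodProb (concatP k' ν Δ (fun b => if b = ℓ-1 then w else W b)) x
          * part (θ τ x) (qfun k' (Tval ν Δ τ) w) s := by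
      rw [hF]; exact Finset.sum_congr rfl fun x _ => by rw [hcc w]
    have hF2 : F (σf w) = ∑ x : Fin (ν*ℓ) → Fin (2*k'),
        prodProb (concatP k' ν Δ (fun b => if b = ℓ-1 then σf w else W b)) x
          * part (θ τ x) (qfun k' (Tval ν Δ τ) (σf w)) s := by
      rw [hF]; exact Finset.sum_congr rfl fun x _ => by rw [hcc (σf w)]
    rw [hF1, hF2]
    -- apply lecam
    have hlecam := lecam
      (prodProb (concatP k' ν Δ (fun b => if b = ℓ-1 then w else W b)))
      (prodProb (concatP k' ν Δ (fun b => if b = ℓ-1 then σf w else W b)))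
      (fun x => part (θ τ x) (qfun k' (Tval ν Δ τ) w) s)
      (fun x => part (θ τ x) (qfun k' (Tval ν Δ τ) (σf w)) s)
      (Tval ν Δ τ / (2*(k':ℝ)))
      (fun x => prodProb_nonneg _
        (fun i j hi => concat_nonneg k' ν Δ hk' hν hνe hΔ hΔh _ i hi j) x)
      (fun x => prodProb_nonneg _
        (fun i j hi => concat_nonneg k' ν Δ hk' hν hνe hΔ hΔh _ i hi j) x)
      (by rw [prodProb_sum]
          exact Finset.prod_eq_one fun i _ => concat_sum k' ν Δ hk' _ _)
      (by rw [prodProb_sum]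
          exact Finset.prod_eq_one fun i _ => concat_sum k' ν Δ hk' _ _)
      (fun x => part_nonneg _ _ _)
      (fun x => part_nonneg _ _ _)
      hδ0
      (by
        intro x
        have hsep := qfun_sep k' hk' (Tval ν Δ τ) hT0 w s
        have hσs : σf w = Function.update w s (!(w s)) := rfl
        rw [← hσs] at hsep
        unfold part
        have t1 : |qfun k' (Tval ν Δ τ) w (coordA k' s) - qfun k' (Tval ν Δ τ) (σf w) (coordA k' s)|
            ≤ |θ τ x (coordA k' s) - qfun k' (Tval ν Δ τ) w (coordA k' s)|
              + |θ τ x (coordA k' s) - qfun k' (Tval ν Δ τ) (σf w) (coordA k' s)| := by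
          have h := abs_sub_le (qfun k' (Tval ν Δ τ) w (coordA k' s)) (θ τ x (coordA k' s))
            (qfun k' (Tval ν Δ τ) (σf w) (coordA k' s))
          rwa [abs_sub_comm (qfun k' (Tval ν Δ τ) w (coordA k' s)) (θ τ x (coordA k' s))] at h
        have t2 : |qfun k' (Tval ν Δ τ) w (coordB k' s) - qfun k' (Tval ν Δ τ) (σf w) (coordB k' s)|
            ≤ |θ τ x (coordB k' s) - qfun k' (Tval ν Δ τ) w (coordB k' s)|
              + |θ τ x (coordB k' s) - qfun k' (Tval ν Δ τ) (σf w) (coordB k' s)| := by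
          have h := abs_sub_le (qfun k' (Tval ν Δ τ) w (coordB k' s)) (θ τ x (coordB k' s))
            (qfun k' (Tval ν Δ τ) (σf w) (coordB k' s))
          rwa [abs_sub_comm (qfun k' (Tval ν Δ τ) w (coordB k' s)) (θ τ x (coordB k' s))] at h
        linarith)
    -- affinity lower bound
    have haff : (1:ℝ)/3 ≤ ∑ x : Fin (ν*ℓ) → Fin (2*k'),
        Real.sqrt (prodProb (concatP k' ν Δ (fun b => if b = ℓ-1 then w else W b)) x
          * prodProb (concatP k' ν Δ (fun b => if b = ℓ-1 then σf w else W b)) x) := by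
      apply affinity_bound k' ν ℓ Δ hk' hΔ hν hνe hℓ hΔh hΔ2 _ _ ?_ s ?_
      · intro b hb; simp only [if_neg hb]
      · simp [hσ]
    have hsq : (1:ℝ)/9 ≤ (∑ x : Fin (ν*ℓ) → Fin (2*k'),
        Real.sqrt (prodProb (concatP k' ν Δ (fun b => if b = ℓ-1 then w else W b)) x
          * prodProb (concatP k' ν Δ (fun b => if b = ℓ-1 then σf w else W b)) x))^2 := by
      nlinarith [haff]
    calc Tval ν Δ τ / (2*(k':ℝ)) / 18
        = (Tval ν Δ τ / (2*(k':ℝ))) * (1/9) / 2 := by ring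
      _ ≤ (Tval ν Δ τ / (2*(k':ℝ))) * (∑ x : Fin (ν*ℓ) → Fin (2*k'),
            Real.sqrt (prodProb (concatP k' ν Δ (fun b => if b = ℓ-1 then w else W b)) x
              * prodProb (concatP k' ν Δ (fun b => if b = ℓ-1 then σf w else W b)) x))^2 / 2 := by
          apply div_le_div_of_nonneg_right (mul_le_mul_of_nonneg_left hsq hδ0) (by norm_num)
      _ ≤ _ := hlecam
  -- sum over w
  have hflip : ∑ w : Fin k' → Bool, F (σf w) = ∑ w : Fin k' → Bool, F w :=
    Fintype.sum_bijective σf hinv.bijective (fun w => F (σf w)) F (fun w => rfl)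
  have hcard : (Finset.univ : Finset (Fin k' → Bool)).card = 2^k' := by
    rw [Finset.card_univ]
    simp [Fintype.card_fun]
  have hsum : (2:ℝ)^k' * (Tval ν Δ τ / (2*(k':ℝ)) / 18) ≤
      ∑ w : Fin k' → Bool, (F w + F (σf w)) := by
    calc (2:ℝ)^k' * (Tval ν Δ τ / (2*(k':ℝ)) / 18)
        = ∑ _w : Fin k' → Bool, (Tval ν Δ τ / (2*(k':ℝ)) / 18) := by
          rw [Finset.sum_const, hcard, nsmul_eq_mul]
          push_cast
          ring
      _ ≤ _ := Finset.sum_le_sum fun w _ => hper w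
  rw [Finset.sum_add_distrib, hflip] at hsum
  have : ∑ w : Fin k' → Bool, F w = (∑ w : Fin k' → Bool, F w + ∑ w : Fin k' → Bool, F w)/2 := by
    ring
  linarith

lemma exp_swap {α : Type*} [Fintype α] (I : Finset ℕ) (p : α → ℝ) (c : ℝ) (F : ℕ → α → ℝ) :
    ∑ x, p x * (c * ∑ τ ∈ I, F τ x) = c * ∑ τ ∈ I, ∑ x, p x * F τ x := by
  calc ∑ x, p x * (c * ∑ τ ∈ I, F τ x)
      = ∑ x, ∑ τ ∈ I, c * (p x * F τ x) := by
        apply Finset.sum_congr rfl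
        intro x _
        rw [Finset.mul_sum, Finset.mul_sum]
        exact Finset.sum_congr rfl fun τ _ => by ring
    _ = ∑ τ ∈ I, ∑ x, c * (p x * F τ x) := Finset.sum_comm
    _ = c * ∑ τ ∈ I, ∑ x, p x * F τ x := by
        rw [Finset.mul_sum]
        exact Finset.sum_congr rfl fun τ _ => by rw [Finset.mul_sum]

set_option maxHeartbeats 1000000 in
lemma main_bound (k' ν ℓ : ℕ) (Δ : ℝ) (hk' : 0 < k') (hΔ : 0 < Δ) (hν : 0 < ν)
    (hνe : ν % 2 = 0) (hℓ : 1 ≤ ℓ)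
    (hΔh : Δ * ((ν/2 : ℕ):ℝ) ≤ 1) (hΔ2 : Δ^2 * ((ν/2:ℕ):ℝ)^3 = 2*(k':ℝ)) (hh3 : 3 ≤ ν/2)
    (W : ℕ → Fin k' → Bool)
    (θ : ℕ → (Fin (ν*ℓ) → Fin (2*k')) → Fin (2*k') → ℝ) :
    (2:ℝ)^k' * (Δ*(ν:ℝ)/864) ≤ ∑ w : Fin k' → Bool,
      Exp (n := ν*ℓ) (concatP k' ν Δ (fun b => if b = ℓ-1 then w else W b))
        (fun x => (1/(ν:ℝ)) * ∑ τ ∈ Finset.Icc (ν*(ℓ-1)+1) (ν*ℓ),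
          TV (θ τ x) (concatP k' ν Δ (fun b => if b = ℓ-1 then w else W b) τ)) := by
  classical
  have hνR : (0:ℝ) < (ν:ℝ) := by exact_mod_cast hν
  have hna : ν*ℓ = ν*(ℓ-1) + ν := by
    have h1 : ℓ-1+1 = ℓ := by omega
    calc ν*ℓ = ν*(ℓ-1+1) := by rw [h1]
      _ = ν*(ℓ-1) + ν := by ring
  set h := ν/2 with hhd
  have hν2h : ν = 2*h := by omega
  -- window sum of Tval
  have hTsum : Δ*(ν:ℝ)^2/12 ≤ ∑ τ ∈ Finset.Icc (ν*(ℓ-1)+1) (ν*ℓ), Tval ν Δ τ := by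
    have hIcc : Finset.Icc (ν*(ℓ-1)+1) (ν*ℓ) = Finset.Ico (ν*(ℓ-1)+1) (ν*(ℓ-1)+ν+1) := by
      rw [Finset.Ico_add_one_right_eq_Icc, hna]
    rw [hIcc, Finset.sum_Ico_eq_sum_range]
    have hcnt : ν*(ℓ-1)+ν+1 - (ν*(ℓ-1)+1) = ν := by omega
    rw [hcnt]
    have hterm : ∀ r ∈ Finset.range ν,
        Tval ν Δ (ν*(ℓ-1)+1+r) = Δ * ((pos' ν (r+1) : ℝ) - 1) := by
      intro r hr
      simp only [Finset.mem_range] at hr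
      obtain ⟨hTw, _⟩ := Tval_window ν ℓ (ν*(ℓ-1)) (ν*(ℓ-1)+1+r) Δ hν hℓ rfl
        (by omega) (by omega)
      rw [hTw, show ν*(ℓ-1)+1+r - ν*(ℓ-1) = r+1 by omega]
    rw [Finset.sum_congr rfl hterm, show (∑ r ∈ Finset.range ν, Δ * ((pos' ν (r+1) : ℝ) - 1))
      = Δ * ∑ r ∈ Finset.range ν, ((pos' ν (r+1) : ℝ) - 1) from (Finset.mul_sum _ _ _).symm]
    have hlow := window_sum_lower ν h hν2h
    have hhR : (ν:ℝ) = 2*(h:ℝ) := by rw [hν2h]; push_cast; ring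
    have hh3R : (3:ℝ) ≤ (h:ℝ) := by exact_mod_cast hh3
    have hgeo : Δ*(ν:ℝ)^2/12 ≤ Δ * ((h:ℝ)*((h:ℝ)-1)/2) := by
      rw [hhR]
      have key : (0:ℝ) ≤ Δ * ((h:ℝ) * ((h:ℝ)-3)) :=
        mul_nonneg hΔ.le (mul_nonneg (by linarith) (by linarith))
      nlinarith
    calc Δ*(ν:ℝ)^2/12 ≤ Δ * ((h:ℝ)*((h:ℝ)-1)/2) := hgeo
      _ ≤ Δ * ∑ r ∈ Finset.range ν, ((pos' ν (r+1) : ℝ) - 1) :=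
          mul_le_mul_of_nonneg_left hlow hΔ.le
  -- per-τ bound summed over s
  have hτbound : ∀ τ ∈ Finset.Icc (ν*(ℓ-1)+1) (ν*ℓ),
      (2:ℝ)^k' * (Tval ν Δ τ/72) ≤
        ∑ w : Fin k' → Bool,
          ∑ x : Fin (ν*ℓ) → Fin (2*k'),
            prodProb (concatP k' ν Δ (fun b => if b = ℓ-1 then w else W b)) x
              * TV (θ τ x) (concatP k' ν Δ (fun b => if b = ℓ-1 then w else W b) τ) := by
    intro τ hτ
    simp only [Finset.mem_Icc] at hτ
    have hdecomp : ∀ w : Fin k' → Bool,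
        ∑ x : Fin (ν*ℓ) → Fin (2*k'),
          prodProb (concatP k' ν Δ (fun b => if b = ℓ-1 then w else W b)) x
            * TV (θ τ x) (concatP k' ν Δ (fun b => if b = ℓ-1 then w else W b) τ)
        = ∑ s : Fin k', ∑ x : Fin (ν*ℓ) → Fin (2*k'),
            prodProb (concatP k' ν Δ (fun b => if b = ℓ-1 then w else W b)) x
              * part (θ τ x) (concatP k' ν Δ (fun b => if b = ℓ-1 then w else W b) τ) s := by
      intro w
      calc ∑ x : Fin (ν*ℓ) → Fin (2*k'),
            prodProb (concatP k' ν Δ (fun b => if b = ℓ-1 then w else W b)) x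
              * TV (θ τ x) (concatP k' ν Δ (fun b => if b = ℓ-1 then w else W b) τ)
          = ∑ x : Fin (ν*ℓ) → Fin (2*k'), ∑ s : Fin k',
              prodProb (concatP k' ν Δ (fun b => if b = ℓ-1 then w else W b)) x
                * part (θ τ x) (concatP k' ν Δ (fun b => if b = ℓ-1 then w else W b) τ) s := by
            apply Finset.sum_congr rfl
            intro x _
            rw [TV_decomp', Finset.mul_sum]
        _ = _ := Finset.sum_comm
    rw [Finset.sum_congr rfl fun w _ => hdecomp w, Finset.sum_comm]
    have hperS : ∀ s : Fin k',
        (2:ℝ)^k' * (Tval ν Δ τ / (2*(k':ℝ)) / 36) ≤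
          ∑ w : Fin k' → Bool,
            ∑ x : Fin (ν*ℓ) → Fin (2*k'),
              prodProb (concatP k' ν Δ (fun b => if b = ℓ-1 then w else W b)) x
                * part (θ τ x) (concatP k' ν Δ (fun b => if b = ℓ-1 then w else W b) τ) s :=
      fun s => pair_bound k' ν ℓ Δ hk' hΔ hν hνe hℓ hΔh hΔ2 W θ τ hτ.1 hτ.2 s
    calc (2:ℝ)^k' * (Tval ν Δ τ/72)
        = ∑ _s : Fin k', (2:ℝ)^k' * (Tval ν Δ τ / (2*(k':ℝ)) / 36) := by
          rw [Finset.sum_const, Finset.card_univ, Fintype.card_fin, nsmul_eq_mul]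
          have hk0 : (k':ℝ) ≠ 0 := by positivity
          field_simp
          ring
      _ ≤ _ := Finset.sum_le_sum fun s _ => hperS s
  -- assemble
  have hexp : ∀ w : Fin k' → Bool,
      Exp (n := ν*ℓ) (concatP k' ν Δ (fun b => if b = ℓ-1 then w else W b))
        (fun x => (1/(ν:ℝ)) * ∑ τ ∈ Finset.Icc (ν*(ℓ-1)+1) (ν*ℓ),
          TV (θ τ x) (concatP k' ν Δ (fun b => if b = ℓ-1 then w else W b) τ))
      = (1/(ν:ℝ)) * ∑ τ ∈ Finset.Icc (ν*(ℓ-1)+1) (ν*ℓ),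
          ∑ x : Fin (ν*ℓ) → Fin (2*k'),
            prodProb (concatP k' ν Δ (fun b => if b = ℓ-1 then w else W b)) x
              * TV (θ τ x) (concatP k' ν Δ (fun b => if b = ℓ-1 then w else W b) τ) := by
    intro w
    unfold Exp
    exact exp_swap _ _ _ _
  rw [Finset.sum_congr rfl fun w _ => hexp w]
  have hswap : (∑ w : Fin k' → Bool, (1/(ν:ℝ)) * ∑ τ ∈ Finset.Icc (ν*(ℓ-1)+1) (ν*ℓ),
        ∑ x : Fin (ν*ℓ) → Fin (2*k'),
          prodProb (concatP k' ν Δ (fun b => if b = ℓ-1 then w else W b)) x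
            * TV (θ τ x) (concatP k' ν Δ (fun b => if b = ℓ-1 then w else W b) τ))
      = (1/(ν:ℝ)) * ∑ τ ∈ Finset.Icc (ν*(ℓ-1)+1) (ν*ℓ), ∑ w : Fin k' → Bool,
          ∑ x : Fin (ν*ℓ) → Fin (2*k'),
            prodProb (concatP k' ν Δ (fun b => if b = ℓ-1 then w else W b)) x
              * TV (θ τ x) (concatP k' ν Δ (fun b => if b = ℓ-1 then w else W b) τ) := by
    rw [← Finset.mul_sum]
    congr 1
    exact Finset.sum_comm
  rw [hswap]
  have hsum2 : ∑ τ ∈ Finset.Icc (ν*(ℓ-1)+1) (ν*ℓ), (2:ℝ)^k' * (Tval ν Δ τ/72)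
      ≤ ∑ τ ∈ Finset.Icc (ν*(ℓ-1)+1) (ν*ℓ), ∑ w : Fin k' → Bool,
          ∑ x : Fin (ν*ℓ) → Fin (2*k'),
            prodProb (concatP k' ν Δ (fun b => if b = ℓ-1 then w else W b)) x
              * TV (θ τ x) (concatP k' ν Δ (fun b => if b = ℓ-1 then w else W b) τ) :=
    Finset.sum_le_sum hτbound
  have hpull : ∑ τ ∈ Finset.Icc (ν*(ℓ-1)+1) (ν*ℓ), (2:ℝ)^k' * (Tval ν Δ τ/72)
      = ((2:ℝ)^k'/72) * ∑ τ ∈ Finset.Icc (ν*(ℓ-1)+1) (ν*ℓ), Tval ν Δ τ := by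
    rw [Finset.mul_sum]
    exact Finset.sum_congr rfl fun τ _ => by ring
  have hfinal : (2:ℝ)^k' * (Δ*(ν:ℝ)/864)
      ≤ (1/(ν:ℝ)) * ∑ τ ∈ Finset.Icc (ν*(ℓ-1)+1) (ν*ℓ), (2:ℝ)^k' * (Tval ν Δ τ/72) := by
    rw [hpull]
    have h2 : (0:ℝ) < (2:ℝ)^k' := by positivity
    rw [show (1/(ν:ℝ)) * (((2:ℝ)^k'/72) * ∑ τ ∈ Finset.Icc (ν*(ℓ-1)+1) (ν*ℓ), Tval ν Δ τ)
        = ((2:ℝ)^k'/(72*(ν:ℝ))) * ∑ τ ∈ Finset.Icc (ν*(ℓ-1)+1) (ν*ℓ), Tval ν Δ τ from by ring]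
    calc (2:ℝ)^k' * (Δ*(ν:ℝ)/864) = ((2:ℝ)^k'/(72*(ν:ℝ))) * (Δ*(ν:ℝ)^2/12) := by
          field_simp
          ring
      _ ≤ _ := mul_le_mul_of_nonneg_left hTsum (by positivity)
  calc (2:ℝ)^k' * (Δ*(ν:ℝ)/864)
      ≤ (1/(ν:ℝ)) * ∑ τ ∈ Finset.Icc (ν*(ℓ-1)+1) (ν*ℓ), (2:ℝ)^k' * (Tval ν Δ τ/72) := hfinal
    _ ≤ _ := mul_le_mul_of_nonneg_left hsum2 (by positivity)

/-- Lemma B.1, block lower bound. With `k = 2k'`, `Δ ∈ (0,1/k)` and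
`ν = 2(k/Δ²)^{1/3}` a positive even integer, there is an absolute constant `c₀ > 0` such
that for every `m ≥ 1`, `ℓ ∈ [m]` and every choice `W` of the first `ℓ−1` blocks from `ℬ`,
the minimax average risk on the `ℓ`-th block — the infimum over adapted pmf-valued online
estimators of the maximum over the last block `B ∈ ℬ` of
`E_{X∼S′×B}[(1/ν)·∑_{i=ν(ℓ−1)+1}^{νℓ} TV(θ̂_i(X_1,…,X_i), P_i)]` — is at least
`c₀·(kΔ)^{1/3}`. -/
theorem stmt13 :
    ∃ c₀ > (0 : ℝ), ∀ (k' ν : ℕ) (Δ : ℝ),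
      0 < k' → 0 < Δ → Δ < 1 / (2 * (k' : ℝ)) →
      0 < ν → ν % 2 = 0 → (ν : ℝ) = 2 * ((2 * (k' : ℝ)) / Δ ^ 2) ^ ((1 : ℝ) / 3) →
      ∀ m : ℕ, 1 ≤ m → ∀ ℓ ∈ Finset.Icc 1 m, ∀ W : ℕ → Fin k' → Bool,
        c₀ * ((2 * (k' : ℝ)) * Δ) ^ ((1 : ℝ) / 3) ≤
          ⨅ θ : {θ : ℕ → (Fin (ν * ℓ) → Fin (2 * k')) → Fin (2 * k') → ℝ //
              Adapted (ν * ℓ) (2 * k') θ ∧ ∀ i x, IsPMF (θ i x)},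
            ⨆ wB : Fin k' → Bool,
              Exp (n := ν * ℓ)
                (concatP k' ν Δ (fun b => if b = ℓ - 1 then wB else W b))
                (fun x => (1 / (ν : ℝ)) * ∑ i ∈ Finset.Icc (ν * (ℓ - 1) + 1) (ν * ℓ),
                  TV (θ.1 i x)
                    (concatP k' ν Δ (fun b => if b = ℓ - 1 then wB else W b) i)) := by
  refine ⟨1/432, by norm_num, ?_⟩
  intro k' ν Δ hk' hΔ hΔk hν hνe hνeq m hm ℓ hℓmem W
  obtain ⟨hℓ1, _⟩ := Finset.mem_Icc.mp hℓmem
  obtain ⟨hΔh, hΔ2, hh3, hfin⟩ := numerics k' ν Δ hk' hΔ hΔk hν hνe hνeq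
  have hνR : (0:ℝ) < (ν:ℝ) := by exact_mod_cast hν
  have hrpow : ((2*(k':ℝ))*Δ) ^ ((1:ℝ)/3) = Δ*(ν:ℝ)/2 := by
    rw [← hfin, ← Real.rpow_natCast (Δ*(ν:ℝ)/2) 3, ← Real.rpow_mul (by positivity)]
    norm_num
  haveI : Nonempty {θ : ℕ → (Fin (ν*ℓ) → Fin (2*k')) → Fin (2*k') → ℝ //
      Adapted (ν*ℓ) (2*k') θ ∧ ∀ i x, IsPMF (θ i x)} := by
    refine ⟨⟨fun _ _ _ => 1/(2*(k':ℝ)), fun i x y _ => rfl,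
      fun i x => ⟨fun j => by positivity, ?_⟩⟩⟩
    rw [Finset.sum_const, Finset.card_univ, Fintype.card_fin, nsmul_eq_mul]
    have hkne : (k':ℝ) ≠ 0 := by positivity
    push_cast
    field_simp
  apply le_ciInf
  intro θ0
  set f : (Fin k' → Bool) → ℝ := fun wB =>
    Exp (n := ν*ℓ) (concatP k' ν Δ (fun b => if b = ℓ-1 then wB else W b))
      (fun x => (1/(ν:ℝ)) * ∑ τ ∈ Finset.Icc (ν*(ℓ-1)+1) (ν*ℓ),
        TV (θ0.1 τ x) (concatP k' ν Δ (fun b => if b = ℓ-1 then wB else W b) τ)) with hfdef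
  show (1/432 : ℝ) * ((2*(k':ℝ))*Δ)^((1:ℝ)/3) ≤ ⨆ wB, f wB
  have hmain : (2:ℝ)^k' * (Δ*(ν:ℝ)/864) ≤ ∑ w : Fin k' → Bool, f w :=
    main_bound k' ν ℓ Δ hk' hΔ hν hνe hℓ1 hΔh hΔ2 hh3 W θ0.1
  have hconst : ∑ _w : Fin k' → Bool, (Δ*(ν:ℝ)/864) = (2:ℝ)^k' * (Δ*(ν:ℝ)/864) := by
    rw [Finset.sum_const, Finset.card_univ, nsmul_eq_mul]
    simp [Fintype.card_fun]
  have hex : ∃ w₀ : Fin k' → Bool, Δ*(ν:ℝ)/864 ≤ f w₀ := by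
    obtain ⟨w₀, _, hw⟩ := Finset.exists_le_of_sum_le (Finset.univ_nonempty)
      (by rw [hconst]; exact hmain :
        ∑ _w : Fin k' → Bool, (Δ*(ν:ℝ)/864) ≤ ∑ w : Fin k' → Bool, f w)
    exact ⟨w₀, hw⟩
  obtain ⟨w₀, hw₀⟩ := hex
  have hbdd : BddAbove (Set.range f) := Set.Finite.bddAbove (Set.finite_range f)
  calc (1/432 : ℝ) * ((2*(k':ℝ))*Δ)^((1:ℝ)/3) = Δ*(ν:ℝ)/864 := by rw [hrpow]; ring
    _ ≤ f w₀ := hw₀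
    _ ≤ ⨆ wB, f wB := le_ciSup hbdd w₀
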